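/- In the limit β → ∞, K_⊥(β)·log(2β)/β → 4/3, so the perpendicular slender-body drag is asymptotically 8πμb/log(2β). -/

import Mathlib

open Real Filter

theorem perpendicular_shape_factor_asymptotics :
    Filter.Tendsto
      (fun β : ℝ =>
        ((8 / 3) * (β ^ 2 - 1) /
          ((2 * β ^ 2 - 3) / Real.sqrt (β ^ 2 - 1) *
              Real.log (β + Real.sqrt (β ^ 2 - 1)) + β)) *
          Real.log (2 * β) / β)
      Filter.atTop (nhds (4 / 3)) := by
  -- helper limits
  have hsq : Tendsto (fun β : ℝ => β ^ 2) atTop atTop :=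
    tendsto_pow_atTop two_ne_zero
  have h1 : Tendsto (fun β : ℝ => (β ^ 2 - 1) / β ^ 2) atTop (nhds 1) := by
    have : Tendsto (fun β : ℝ => 1 - (β ^ 2)⁻¹) atTop (nhds (1 - 0)) :=
      tendsto_const_nhds.sub (tendsto_inv_atTop_zero.comp hsq)
    rw [sub_zero] at this
    refine this.congr' ?_
    filter_upwards [eventually_ge_atTop (2:ℝ)] with β hβ
    have hβ2 : (β:ℝ) ^ 2 ≠ 0 := by nlinarith
    field_simp
  have h2 : Tendsto (fun β : ℝ => Real.sqrt (β ^ 2 - 1) / β) atTop (nhds 1) := by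
    have hc : Tendsto (fun x : ℝ => Real.sqrt x) (nhds 1) (nhds 1) := by
      have := Real.continuous_sqrt.tendsto 1
      rwa [Real.sqrt_one] at this
    have := hc.comp h1
    refine this.congr' ?_
    filter_upwards [eventually_ge_atTop (2:ℝ)] with β hβ
    have hβ0 : (0:ℝ) ≤ β := by linarith
    have hnum : (0:ℝ) ≤ β ^ 2 - 1 := by nlinarith
    simp only [Function.comp]
    rw [Real.sqrt_div hnum, Real.sqrt_sq hβ0]
  have hLtop : Tendsto (fun β : ℝ => Real.log (β + Real.sqrt (β ^ 2 - 1))) atTop atTop := by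
    refine Real.tendsto_log_atTop.comp ?_
    refine tendsto_atTop_mono (fun β => ?_) tendsto_id
    exact le_add_of_nonneg_right (Real.sqrt_nonneg _)
  have h3 : Tendsto (fun β : ℝ =>
      Real.log (2 * β) / Real.log (β + Real.sqrt (β ^ 2 - 1))) atTop (nhds 1) := by
    have hupper : Tendsto (fun β : ℝ => 1 + Real.log 2 * (Real.log β)⁻¹) atTop
        (nhds (1 + Real.log 2 * 0)) :=
      tendsto_const_nhds.add
        (tendsto_const_nhds.mul (tendsto_inv_atTop_zero.comp Real.tendsto_log_atTop))
    rw [mul_zero, add_zero] at hupper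
    refine tendsto_of_tendsto_of_tendsto_of_le_of_le' tendsto_const_nhds hupper ?_ ?_
    · filter_upwards [eventually_ge_atTop (2:ℝ)] with β hβ
      have hs : (0:ℝ) ≤ Real.sqrt (β ^ 2 - 1) := Real.sqrt_nonneg _
      have hL0 : 0 < Real.log (β + Real.sqrt (β ^ 2 - 1)) :=
        Real.log_pos (by nlinarith)
      have hle : Real.log (β + Real.sqrt (β ^ 2 - 1)) ≤ Real.log (2 * β) := by
        apply Real.log_le_log (by nlinarith)
        have hsq' : Real.sqrt (β ^ 2 - 1) ^ 2 = β ^ 2 - 1 :=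
          Real.sq_sqrt (by nlinarith)
        have : Real.sqrt (β ^ 2 - 1) ≤ β := by nlinarith
        linarith
      rw [one_le_div hL0]
      exact hle
    · filter_upwards [eventually_ge_atTop (2:ℝ)] with β hβ
      have hlogβ : 0 < Real.log β := Real.log_pos (by linarith)
      have hs : (0:ℝ) ≤ Real.sqrt (β ^ 2 - 1) := Real.sqrt_nonneg _
      have hL : Real.log β ≤ Real.log (β + Real.sqrt (β ^ 2 - 1)) :=
        Real.log_le_log (by linarith) (by linarith)
      have h2β : Real.log (2 * β) = Real.log 2 + Real.log β :=
        Real.log_mul two_ne_zero (by linarith)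
      have hnn : 0 ≤ Real.log (2 * β) := by
        rw [h2β]; positivity
      calc Real.log (2 * β) / Real.log (β + Real.sqrt (β ^ 2 - 1))
          ≤ Real.log (2 * β) / Real.log β := by gcongr
        _ = 1 + Real.log 2 * (Real.log β)⁻¹ := by
            rw [h2β]; field_simp; ring
  have h4 : Tendsto (fun β : ℝ =>
      (Real.sqrt (β ^ 2 - 1) / β) * (Real.log (β + Real.sqrt (β ^ 2 - 1)))⁻¹)
      atTop (nhds (1 * 0)) :=
    h2.mul (tendsto_inv_atTop_zero.comp hLtop)
  rw [one_mul] at h4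
  -- the normalized form
  have hden : Tendsto (fun β : ℝ =>
      (2 - 3 * (β ^ 2)⁻¹) + (Real.sqrt (β ^ 2 - 1) / β) *
        (Real.log (β + Real.sqrt (β ^ 2 - 1)))⁻¹) atTop (nhds ((2 - 3 * 0) + 0)) :=
    (tendsto_const_nhds.sub (tendsto_const_nhds.mul (tendsto_inv_atTop_zero.comp hsq))).add h4
  have hnum : Tendsto (fun β : ℝ =>
      (8 / 3 : ℝ) * ((β ^ 2 - 1) / β ^ 2 * (Real.sqrt (β ^ 2 - 1) / β) *
        (Real.log (2 * β) / Real.log (β + Real.sqrt (β ^ 2 - 1)))))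
      atTop (nhds ((8 / 3 : ℝ) * (1 * 1 * 1))) :=
    tendsto_const_nhds.mul ((h1.mul h2).mul h3)
  have hg : Tendsto (fun β : ℝ =>
      ((8 / 3 : ℝ) * ((β ^ 2 - 1) / β ^ 2 * (Real.sqrt (β ^ 2 - 1) / β) *
        (Real.log (2 * β) / Real.log (β + Real.sqrt (β ^ 2 - 1))))) /
      ((2 - 3 * (β ^ 2)⁻¹) + (Real.sqrt (β ^ 2 - 1) / β) *
        (Real.log (β + Real.sqrt (β ^ 2 - 1)))⁻¹))
      atTop (nhds (4 / 3)) := by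
    have := hnum.div hden (by norm_num)
    convert this using 2
    all_goals norm_num
  refine hg.congr' ?_
  filter_upwards [eventually_ge_atTop (2:ℝ)] with β hβ
  have hβ0 : (0:ℝ) < β := by linarith
  have hs : 0 < Real.sqrt (β ^ 2 - 1) := Real.sqrt_pos.mpr (by nlinarith)
  have hL0 : 0 < Real.log (β + Real.sqrt (β ^ 2 - 1)) := Real.log_pos (by nlinarith)
  have h23 : (0:ℝ) < 2 * β ^ 2 - 3 := by nlinarith
  set s := Real.sqrt (β ^ 2 - 1) with hsdef
  set L := Real.log (β + s) with hLdef
  have hW : (2 * β ^ 2 - 3) / s * L + β ≠ 0 := by positivity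
  have hD : (2 - 3 * (β ^ 2)⁻¹) + (s / β) * L⁻¹ ≠ 0 := by
    have h2' : (0:ℝ) < 2 - 3 * (β ^ 2)⁻¹ := by
      rw [sub_pos]
      rw [mul_inv_lt_iff₀ (by positivity)]
      nlinarith
    positivity
  field_simp
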